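/- arXiv:quant-ph/9912054 — 4 statements merged into one kernel-verified Lean document; each statement's English description precedes it below -/
import Mathlib

section
/- For every point z in an open set U ⊆ ℂ and every holomorphic function F on U that is square-integrable with respect to a continuous strictly positive weight α, there exists a constant c_z (depending only on z, U, α) such that |F(z)|² ≤ c_z · ∫_U |F(w)|² α(w) dw. -/
open MeasureTheory Metric Set Complex Real

-- Cauchy-Schwarz with constant 1
lemma aux_cs {X : Type*} [MeasurableSpace X] (μ : Measure X) [IsFiniteMeasure μ]
    {g : X → ℝ} (hg : Integrable g μ) (hg2 : Integrable (fun x => g x ^ 2) μ) :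
    (∫ x, g x ∂μ) ^ 2 ≤ (μ Set.univ).toReal * ∫ x, g x ^ 2 ∂μ := by
  set T := (μ Set.univ).toReal with hT
  set A := ∫ x, g x ∂μ with hA
  by_cases h0 : μ Set.univ = 0
  · have : μ = 0 := Measure.measure_univ_eq_zero.mp h0
    simp [hA, hT, this]
  · have hTpos : 0 < T := ENNReal.toReal_pos h0 (measure_ne_top μ _)
    have hexp : ∀ x, (T * g x - A) ^ 2 = T ^ 2 * g x ^ 2 - (2 * T * A) * g x + A ^ 2 := by
      intro x; ring
    have h1 : (0:ℝ) ≤ ∫ x, (T * g x - A) ^ 2 ∂μ :=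
      integral_nonneg fun x => sq_nonneg _
    have h2 : ∫ x, (T * g x - A) ^ 2 ∂μ
        = T ^ 2 * (∫ x, g x ^ 2 ∂μ) - (2 * T * A) * A + A ^ 2 * T := by
      simp only [hexp]
      have hI : Integrable (fun x => T ^ 2 * g x ^ 2 - 2 * T * A * g x) μ :=
        (hg2.const_mul (T^2)).sub (hg.const_mul (2*T*A))
      rw [integral_add hI (integrable_const _),
        integral_sub (hg2.const_mul (T^2)) (hg.const_mul (2*T*A)), integral_const_mul,
        integral_const_mul, integral_const, smul_eq_mul]
      rw [← hA, measureReal_def, ← hT]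
      ring
    rw [h2] at h1
    nlinarith [hTpos]


lemma aux_meanvalue {f : ℂ → ℂ} {z : ℂ} {s : ℝ} (hs : 0 < s)
    (hf : DifferentiableOn ℂ f (closedBall z s)) :
    ∫ θ in (0)..(2 * π), f (circleMap z s θ) = 2 * (π : ℂ) * f z := by
  have h := hf.circleIntegral_sub_inv_smul (mem_ball_self hs)
  have h2 : (∮ w in C(z, s), (w - z)⁻¹ • f w)
      = ∫ θ in (0)..(2 * π), I * f (circleMap z s θ) := by
    rw [circleIntegral]
    refine intervalIntegral.integral_congr fun θ _ => ?_
    have hne : circleMap 0 s θ ≠ 0 := fun hEq => hs.ne' (circleMap_eq_center_iff.mp hEq)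
    rw [deriv_circleMap, circleMap_sub_center, smul_eq_mul, smul_eq_mul]
    field_simp
  rw [h2, intervalIntegral.integral_const_mul, smul_eq_mul] at h
  have h3 : I * ∫ θ in (0)..(2 * π), f (circleMap z s θ)
      = I * (2 * (π : ℂ) * f z) := by rw [h]; ring
  exact mul_left_cancel₀ I_ne_zero h3

lemma aux_circle {f : ℂ → ℂ} {z : ℂ} {s : ℝ} (hs : 0 < s)
    (hf : DifferentiableOn ℂ f (closedBall z s)) :
    2 * π * ‖f z‖ ^ 2
      ≤ ∫ θ in Ioc 0 (2 * π), ‖f (circleMap z s θ)‖ ^ 2 := by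
  have hcont : Continuous fun θ => f (circleMap z s θ) :=
    hf.continuousOn.comp_continuous (continuous_circleMap _ _)
      fun θ => circleMap_mem_closedBall z hs.le θ
  set g : ℝ → ℝ := fun θ => ‖f (circleMap z s θ)‖ with hg
  have hgc : Continuous g := continuous_norm.comp hcont
  set μ : Measure ℝ := volume.restrict (Ioc 0 (2 * π)) with hμ
  have hfin : IsFiniteMeasure μ := by
    constructor
    rw [hμ, Measure.restrict_apply_univ, Real.volume_Ioc]
    exact ENNReal.ofReal_lt_top
  have hμuniv : (μ Set.univ).toReal = 2 * π := by
    rw [hμ, Measure.restrict_apply_univ, Real.volume_Ioc, ENNReal.toReal_ofReal (by linarith [Real.pi_pos])]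
    ring
  have hgi : Integrable g μ := (hgc.integrableOn_Ioc)
  have hg2i : Integrable (fun θ => g θ ^ 2) μ := ((hgc.pow 2).integrableOn_Ioc)
  -- mean value bound on ∫ g
  have hA : 2 * π * ‖f z‖ ≤ ∫ θ, g θ ∂μ := by
    have hmv := aux_meanvalue hs hf
    have : ‖∫ θ in (0)..(2 * π), f (circleMap z s θ)‖ = 2 * π * ‖f z‖ := by
      rw [hmv, norm_mul, norm_mul]
      simp [Complex.norm_real, _root_.abs_of_nonneg Real.pi_nonneg]
    calc 2 * π * ‖f z‖ = ‖∫ θ in (0)..(2 * π), f (circleMap z s θ)‖ := this.symm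
      _ ≤ ∫ θ in (0)..(2 * π), ‖f (circleMap z s θ)‖ :=
          intervalIntegral.norm_integral_le_integral_norm (by positivity)
      _ = ∫ θ, g θ ∂μ := by
          rw [intervalIntegral.integral_of_le (by positivity)]
  have hA0 : (0:ℝ) ≤ ∫ θ, g θ ∂μ :=
    le_trans (by positivity) hA
  have hcs := aux_cs μ hgi hg2i
  rw [hμuniv] at hcs
  have hsq : (2 * π * ‖f z‖) ^ 2 ≤ (∫ θ, g θ ∂μ) ^ 2 := by
    apply pow_le_pow_left₀ (by positivity) hA
  have : (2 * π * ‖f z‖) ^ 2 ≤ 2 * π * ∫ θ, g θ ^ 2 ∂μ := hsq.trans hcs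
  show 2 * π * ‖f z‖ ^ 2 ≤ ∫ θ, g θ ^ 2 ∂μ
  nlinarith [Real.pi_pos, this]


lemma aux_circlemap_eq (z : ℂ) (s θ : ℝ) :
    circleMap z s θ = z + (s : ℂ) * (Real.cos θ + Real.sin θ * Complex.I) := by
  simp [circleMap, Complex.exp_mul_I, Complex.ofReal_cos, Complex.ofReal_sin]


lemma aux_polar {F : ℂ → ℂ} {z : ℂ} {r : ℝ} (hr : 0 < r)
    (hF : DifferentiableOn ℂ F (closedBall z r)) :
    π * r ^ 2 * ‖F z‖ ^ 2 ≤ ∫ w in closedBall z r, ‖F w‖ ^ 2 := by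
  have hFc : ContinuousOn F (closedBall z r) := hF.continuousOn
  set q : ℂ → ℝ := fun w => ‖F w‖ ^ 2 with hq
  set g : ℂ → ℝ := (closedBall (0:ℂ) r).indicator (fun w => q (z + w)) with hgdef
  set Φ : ℝ × ℝ → ℂ := fun p => (p.1 : ℂ) * (Real.cos p.2 + Real.sin p.2 * Complex.I) with hΦdef
  have hΦc : Continuous Φ := by fun_prop
  set S : Set (ℝ × ℝ) := Ioc 0 r ×ˢ Ioo (-π) π with hSdef
  set h : ℝ × ℝ → ℝ := fun p => p.1 * q (z + Φ p) with hhdef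
  -- step a : translate
  have step_a : ∫ w in closedBall z r, q w = ∫ w, g w := by
    rw [← integral_indicator measurableSet_closedBall]
    rw [← MeasureTheory.integral_add_left_eq_self ((closedBall z r).indicator q) z]
    congr 1
    funext w
    by_cases hw : w ∈ closedBall (0:ℂ) r
    · rw [hgdef, Set.indicator_of_mem hw, Set.indicator_of_mem]
      simpa [dist_eq_norm] using hw
    · rw [hgdef, Set.indicator_of_notMem hw, Set.indicator_of_notMem]
      intro hmem
      apply hw
      simpa [dist_eq_norm] using hmem
  -- step b : polar coordinates
  have step_b : ∫ w, g w = ∫ p in polarCoord.target, p.1 • g (Complex.polarCoord.symm p) :=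
    (Complex.integral_comp_polarCoord_symm g).symm
  -- step c : restrict to S
  have hStarget : S ⊆ polarCoord.target := by
    rw [hSdef, polarCoord_target]
    exact Set.prod_mono Ioc_subset_Ioi_self subset_rfl
  have step_c : ∫ p in polarCoord.target, p.1 • g (Complex.polarCoord.symm p)
      = ∫ p in S, p.1 • g (Complex.polarCoord.symm p) := by
    apply setIntegral_eq_of_subset_of_forall_diff_eq_zero
      (isOpen_Ioi.prod isOpen_Ioo).measurableSet hStarget
    intro p hp
    obtain ⟨hpt, hpS⟩ := hp
    have hp1 : 0 < p.1 := hpt.1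
    have hp2 : p.2 ∈ Ioo (-π) π := hpt.2
    have hp1r : r < p.1 := by
      by_contra hle
      exact hpS ⟨⟨hp1, not_lt.mp hle⟩, hp2⟩
    have : Complex.polarCoord.symm p ∉ closedBall (0:ℂ) r := by
      rw [mem_closedBall, dist_zero_right, Complex.norm_polarCoord_symm,
        _root_.abs_of_pos hp1]
      exact not_le.mpr hp1r
    rw [hgdef, Set.indicator_of_notMem this, smul_zero]
  -- step c' : rewrite integrand on S
  have hSmeas : MeasurableSet S := measurableSet_Ioc.prod measurableSet_Ioo
  have step_c' : ∫ p in S, p.1 • g (Complex.polarCoord.symm p) = ∫ p in S, h p := by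
    apply setIntegral_congr_fun hSmeas
    intro p hp
    have hp1 : 0 < p.1 := hp.1.1
    have hmem : Complex.polarCoord.symm p ∈ closedBall (0:ℂ) r := by
      rw [mem_closedBall, dist_zero_right, Complex.norm_polarCoord_symm,
        _root_.abs_of_pos hp1]
      exact hp.1.2
    show p.1 • g (Complex.polarCoord.symm p) = h p
    rw [hgdef, Set.indicator_of_mem hmem, smul_eq_mul, hhdef]
    simp only [Complex.polarCoord_symm_apply, hΦdef]
  -- integrability of h on S
  have hTsub : S ⊆ Icc 0 r ×ˢ Icc (-π) π :=
    Set.prod_mono Ioc_subset_Icc_self Ioo_subset_Icc_self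
  have hmaps : MapsTo (fun p => z + Φ p) (Icc 0 r ×ˢ Icc (-π) π) (closedBall z r) := by
    intro p hp
    rw [mem_closedBall, dist_eq_norm]
    have : ‖Φ p‖ = |p.1| := by
      rw [hΦdef]
      simp only [norm_mul, Complex.norm_real, Real.norm_eq_abs]
      have hexp : ((Real.cos p.2 : ℂ) + (Real.sin p.2 : ℂ) * Complex.I)
          = Complex.exp (p.2 * Complex.I) := by
        rw [Complex.exp_mul_I, Complex.ofReal_cos, Complex.ofReal_sin]
      rw [hexp, Complex.norm_exp_ofReal_mul_I, mul_one]
    simp only [add_sub_cancel_left]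
    rw [this, _root_.abs_of_nonneg hp.1.1]
    exact hp.1.2
  have hhc : ContinuousOn h (Icc 0 r ×ˢ Icc (-π) π) := by
    apply ContinuousOn.mul continuousOn_fst
    have h1 : ContinuousOn (fun p : ℝ × ℝ => F (z + Φ p)) (Icc 0 r ×ˢ Icc (-π) π) :=
      hFc.comp ((continuous_const.add hΦc).continuousOn) hmaps
    exact (continuous_norm.comp_continuousOn h1).pow 2
  have hInt : IntegrableOn h S := by
    apply IntegrableOn.mono_set _ hTsub
    exact hhc.integrableOn_compact (isCompact_Icc.prod isCompact_Icc)
  -- Fubini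
  have hIntP : Integrable h ((volume.restrict (Ioc 0 r)).prod (volume.restrict (Ioo (-π) π))) := by
    rw [Measure.prod_restrict]
    rw [← Measure.volume_eq_prod]
    exact hInt
  have step_d : ∫ p in S, h p = ∫ s in Ioc 0 r, ∫ θ in Ioo (-π) π, h (s, θ) := by
    rw [hSdef, Measure.volume_eq_prod, setIntegral_prod]
    rw [← Measure.volume_eq_prod]
    exact hInt
  -- inner bound
  have inner_bound : ∀ s ∈ Ioc 0 r,
      (2 * π * ‖F z‖ ^ 2) * s ≤ ∫ θ in Ioo (-π) π, h (s, θ) := by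
    intro s hs
    have hs0 : 0 < s := hs.1
    have hsub : closedBall z s ⊆ closedBall z r := closedBall_subset_closedBall hs.2
    have hQ : ∀ θ : ℝ, h (s, θ) = s * q (circleMap z s θ) := by
      intro θ
      rw [hhdef, aux_circlemap_eq]
    have hper : Function.Periodic (fun θ => q (circleMap z s θ)) (2 * π) :=
      (periodic_circleMap z s).comp q
    have hval : ∫ θ in Ioo (-π) π, h (s, θ)
        = s * ∫ θ in Ioc 0 (2 * π), q (circleMap z s θ) := by
      simp only [hQ]
      rw [integral_const_mul]
      congr 1
      rw [← integral_Ioc_eq_integral_Ioo,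
        ← intervalIntegral.integral_of_le (by linarith [Real.pi_pos] : -π ≤ π),
        ← intervalIntegral.integral_of_le (by positivity : (0:ℝ) ≤ 2 * π)]
      have := hper.intervalIntegral_add_eq (-π) 0
      norm_num at this ⊢
      rw [show -π + 2 * π = π by ring] at this
      exact this
    rw [hval]
    have hcb := aux_circle hs0 (hF.mono hsub)
    calc (2 * π * ‖F z‖ ^ 2) * s
        = s * (2 * π * ‖F z‖ ^ 2) := by ring
      _ ≤ s * ∫ θ in Ioc 0 (2 * π), q (circleMap z s θ) :=
          mul_le_mul_of_nonneg_left hcb hs0.le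
  -- outer bound
  have hIl : IntegrableOn (fun s => ∫ θ in Ioo (-π) π, h (s, θ)) (Ioc 0 r) :=
    hIntP.integral_prod_left
  have hIlow : IntegrableOn (fun s => (2 * π * ‖F z‖ ^ 2) * s) (Ioc 0 r) :=
    (continuous_const.mul continuous_id).integrableOn_Ioc
  have outer : ∫ s in Ioc 0 r, (2 * π * ‖F z‖ ^ 2) * s
      ≤ ∫ s in Ioc 0 r, ∫ θ in Ioo (-π) π, h (s, θ) :=
    setIntegral_mono_on hIlow hIl measurableSet_Ioc inner_bound
  have hlowval : ∫ s in Ioc 0 r, (2 * π * ‖F z‖ ^ 2) * s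
      = π * r ^ 2 * ‖F z‖ ^ 2 := by
    rw [integral_const_mul, ← intervalIntegral.integral_of_le hr.le]
    rw [integral_id]
    ring
  calc π * r ^ 2 * ‖F z‖ ^ 2
      = ∫ s in Ioc 0 r, (2 * π * ‖F z‖ ^ 2) * s := hlowval.symm
    _ ≤ ∫ s in Ioc 0 r, ∫ θ in Ioo (-π) π, h (s, θ) := outer
    _ = ∫ p in S, h p := step_d.symm
    _ = ∫ w in closedBall z r, q w := by
        rw [← step_c', ← step_c, ← step_b, ← step_a]


theorem pointwise_evaluation_bound
    (U : Set ℂ) (hU : IsOpen U) (hne : U.Nonempty)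
    (α : ℂ → ℝ) (hα : ContinuousOn α U) (hαpos : ∀ z ∈ U, 0 < α z)
    (z : ℂ) (hz : z ∈ U) :
    ∃ c : ℝ, ∀ F : ℂ → ℂ, DifferentiableOn ℂ F U →
      IntegrableOn (fun w => ‖F w‖ ^ 2 * α w) U →
      ‖F z‖ ^ 2 ≤ c * ∫ w in U, ‖F w‖ ^ 2 * α w := by
  obtain ⟨ε, hε, hball⟩ := Metric.isOpen_iff.mp hU z hz
  set r : ℝ := ε / 2 with hrdef
  have hr : 0 < r := by positivity
  set K : Set ℂ := closedBall z r with hKdef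
  have hKU : K ⊆ U := (closedBall_subset_ball (by linarith)).trans hball
  have hK : IsCompact K := isCompact_closedBall z r
  obtain ⟨x₀, hx₀K, hmin⟩ := hK.exists_isMinOn ⟨z, mem_closedBall_self hr.le⟩ (hα.mono hKU)
  set m : ℝ := α x₀ with hmdef
  have hm : 0 < m := hαpos x₀ (hKU hx₀K)
  refine ⟨(π * r ^ 2 * m)⁻¹, fun F hFd hFi => ?_⟩
  have hpos : 0 < π * r ^ 2 * m := by positivity
  have key : π * r ^ 2 * ‖F z‖ ^ 2 ≤ ∫ w in K, ‖F w‖ ^ 2 :=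
    aux_polar hr (hFd.mono hKU)
  have hqc : ContinuousOn (fun w => ‖F w‖ ^ 2) K :=
    (continuous_norm.comp_continuousOn (hFd.continuousOn.mono hKU)).pow 2
  have hint1 : IntegrableOn (fun w => ‖F w‖ ^ 2) K :=
    hqc.integrableOn_compact hK
  have hint2 : IntegrableOn (fun w => ‖F w‖ ^ 2 * α w) K :=
    (hqc.mul (hα.mono hKU)).integrableOn_compact hK
  have hstep1 : m * ∫ w in K, ‖F w‖ ^ 2
      ≤ ∫ w in K, ‖F w‖ ^ 2 * α w := by
    rw [← integral_const_mul]
    refine setIntegral_mono_on (hint1.const_mul m) hint2 measurableSet_closedBall ?_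
    intro w hw
    have h1 : m ≤ α w := hmin hw
    have h2 : (0:ℝ) ≤ ‖F w‖ ^ 2 := by positivity
    nlinarith
  have hnonneg : 0 ≤ᵐ[volume.restrict U] fun w => ‖F w‖ ^ 2 * α w :=
    ae_restrict_of_forall_mem hU.measurableSet fun w hw =>
      mul_nonneg (by positivity) (hαpos w hw).le
  have hstep2 : ∫ w in K, ‖F w‖ ^ 2 * α w
      ≤ ∫ w in U, ‖F w‖ ^ 2 * α w :=
    setIntegral_mono_set hFi hnonneg (HasSubset.Subset.eventuallyLE hKU)
  rw [inv_mul_eq_div, le_div_iff₀ hpos]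
  nlinarith [key, hstep1, hstep2, hm]
end

section
/- The space of holomorphic functions on an open set U ⊆ ℂ that are square-integrable against a continuous strictly positive weight α is a closed subspace of L²(U, α dA): if Fₙ are holomorphic, F ∈ L²(U, α dA), and Fₙ → F in L², then F agrees almost everywhere with a holomorphic function. -/
open MeasureTheory Metric Real Complex intervalIntegral Set


lemma circle_mean {f : ℂ → ℂ} {c : ℂ} {s : ℝ} (hs : 0 < s)
    (hc : ContinuousOn f (closedBall c s))
    (hd : ∀ z ∈ ball c s, DifferentiableAt ℂ f z) :
    (2 * π) * f c = ∫ θ in (0:ℝ)..(2*π), f (circleMap c s θ) := by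
  have h := Complex.circleIntegral_sub_center_inv_smul_of_differentiable_on_off_countable hs
    Set.countable_empty hc (fun z hz => hd z hz.1)
  rw [circleIntegral] at h
  have hne : ∀ θ : ℝ, circleMap 0 s θ ≠ 0 := fun θ h0 => by
    have : ‖circleMap 0 s θ‖ = |s| := norm_circleMap_zero s θ
    rw [h0, norm_zero, abs_of_pos hs] at this
    exact hs.ne' this.symm
  have heq : ∀ θ : ℝ, (deriv (circleMap c s) θ) • ((circleMap c s θ - c)⁻¹ • f (circleMap c s θ))
      = I • f (circleMap c s θ) := by
    intro θ
    rw [deriv_circleMap, circleMap_sub_center]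
    rw [smul_eq_mul, smul_eq_mul, smul_eq_mul]
    field_simp [hne θ]
  simp_rw [heq] at h
  rw [intervalIntegral.integral_smul] at h
  simp only [smul_eq_mul] at h
  exact (mul_left_cancel₀ I_ne_zero (by rw [h]; ring :
    I * ∫ θ in (0:ℝ)..(2*π), f (circleMap c s θ) = I * (2 * ↑π * f c))).symm

lemma circle_submean_sq {f : ℂ → ℂ} {c : ℂ} {s : ℝ} (hs : 0 < s)
    (hc : ContinuousOn f (closedBall c s))
    (hd : ∀ z ∈ ball c s, DifferentiableAt ℂ f z) :
    ‖f c‖ ^ 2 * (2 * π) ≤ ∫ θ in (0:ℝ)..(2*π), ‖f (circleMap c s θ)‖ ^ 2 := by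
  set g : ℝ → ℝ := fun θ => ‖f (circleMap c s θ)‖ with hgdef
  have hgc : Continuous g := by
    have : ContinuousOn (fun θ : ℝ => f (circleMap c s θ)) Set.univ :=
      hc.comp (continuous_circleMap c s).continuousOn
        (fun θ _ => sphere_subset_closedBall (circleMap_mem_sphere c hs.le θ))
    rw [continuousOn_univ] at this
    exact continuous_norm.comp this
  have hgi : IntervalIntegrable g volume 0 (2*π) := hgc.intervalIntegrable _ _
  have hg2i : IntervalIntegrable (fun θ => g θ ^ 2) volume 0 (2*π) :=
    (hgc.pow 2).intervalIntegrable _ _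
  set A := ∫ θ in (0:ℝ)..(2*π), g θ with hA
  have h1 : 2 * π * ‖f c‖ ≤ A := by
    have := circle_mean hs hc hd
    calc 2 * π * ‖f c‖ = ‖(2 * (π:ℂ)) * f c‖ := by
          rw [norm_mul]
          have : (2 * (π:ℂ)) = ((2*π : ℝ) : ℂ) := by push_cast; ring
          rw [this, Complex.norm_real, Real.norm_eq_abs, abs_of_pos (by positivity)]
      _ = ‖∫ θ in (0:ℝ)..(2*π), f (circleMap c s θ)‖ := by rw [this]
      _ ≤ ∫ θ in (0:ℝ)..(2*π), ‖f (circleMap c s θ)‖ :=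
          intervalIntegral.norm_integral_le_integral_norm (by positivity)
      _ = A := rfl
  set a := A / (2*π) with ha
  have key : 0 ≤ ∫ θ in (0:ℝ)..(2*π), (g θ - a)^2 :=
    intervalIntegral.integral_nonneg (by positivity) (fun θ _ => sq_nonneg _)
  have expand : ∫ θ in (0:ℝ)..(2*π), (g θ - a)^2
      = (∫ θ in (0:ℝ)..(2*π), g θ ^ 2) - 2*a*A + a^2*(2*π) := by
    have : ∀ θ, (g θ - a)^2 = g θ ^ 2 - (2*a) * g θ + a^2 := fun θ => by ring
    simp_rw [this]
    rw [intervalIntegral.integral_add (hg2i.sub (hgi.const_mul (2*a))) intervalIntegrable_const,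
        intervalIntegral.integral_sub hg2i (hgi.const_mul (2*a)),
        intervalIntegral.integral_const_mul, intervalIntegral.integral_const]
    simp [← hA]
    ring
  rw [expand] at key
  have hπ := Real.pi_pos
  have habs : (0:ℝ) ≤ ‖f c‖ := norm_nonneg _
  have hAnn : 0 ≤ A := le_trans (by positivity) h1
  have hπ2 : (0:ℝ) < 2*π := by positivity
  have hid : 2*a*A - a^2*(2*π) = A^2/(2*π) := by
    rw [ha]; field_simp; ring
  have h2 : A^2/(2*π) ≤ ∫ θ in (0:ℝ)..(2*π), g θ ^ 2 := by linarith
  have hcs : A^2 ≤ (∫ θ in (0:ℝ)..(2*π), g θ ^ 2) * (2*π) := (div_le_iff₀ hπ2).mp h2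
  nlinarith [mul_self_le_mul_self (by positivity : (0:ℝ) ≤ 2*π*‖f c‖) h1, hπ, hcs]

lemma ball_submean_sq {f : ℂ → ℂ} {U : Set ℂ} (hU : IsOpen U) (hf : DifferentiableOn ℂ f U)
    {c : ℂ} {r : ℝ} (hr : 0 < r) (hball : closedBall c r ⊆ U) :
    ‖f c‖ ^ 2 * (π * r ^ 2) ≤ ∫ w in ball c r, ‖f w‖ ^ 2 := by
  set h : ℂ → ℝ := fun w => ‖f w‖ ^ 2 with hh
  set g : ℂ → ℝ := fun z => (ball c r).indicator h (c + z) with hg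
  set k : ℝ × ℝ → ℝ := fun p => p.1 * ‖f (circleMap c p.1 p.2)‖ ^ 2 with hk
  set S : Set (ℝ × ℝ) := Ioo 0 r ×ˢ Ioo (-π) π with hS
  have hfc : ContinuousOn f (closedBall c r) := (hf.continuousOn).mono hball
  have hsymm : ∀ p : ℝ × ℝ, c + Complex.polarCoord.symm p = circleMap c p.1 p.2 := by
    intro p
    rw [Complex.polarCoord_symm_apply, circleMap, Complex.exp_mul_I]
    push_cast; ring
  -- translation
  have hgint : ∫ z, g z = ∫ w in ball c r, h w := by
    rw [hg]
    rw [integral_add_left_eq_self ((ball c r).indicator h) c]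
    exact integral_indicator measurableSet_ball
  -- polar change of variables
  have hpolar := Complex.integral_comp_polarCoord_symm g
  -- rewrite target integral as integral over S
  have hcongr : ∀ p ∈ polarCoord.target, p.1 • g (Complex.polarCoord.symm p) = S.indicator k p := by
    rintro ⟨s, θ⟩ hp
    obtain ⟨hs, hθ⟩ : s ∈ Ioi (0:ℝ) ∧ θ ∈ Ioo (-π) π := by
      simpa [polarCoord_target] using hp
    have habs : ‖Complex.polarCoord.symm (s, θ)‖ = s := by
      rw [Complex.norm_polarCoord_symm]; exact abs_of_pos hs
    have hmem : c + Complex.polarCoord.symm (s, θ) ∈ ball c r ↔ s < r := by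
      rw [mem_ball, dist_eq_norm]
      simp only [add_sub_cancel_left]
      rw [habs]
    by_cases hsr : s < r
    · have h1 : (s, θ) ∈ S := ⟨⟨hs, hsr⟩, hθ⟩
      rw [Set.indicator_of_mem h1]
      simp only [hg, hk]
      rw [Set.indicator_of_mem (hmem.mpr hsr), smul_eq_mul,
        show c + (Complex.polarCoord.symm (s, θ)) = circleMap c s θ from hsymm (s, θ)]
    · have h1 : (s, θ) ∉ S := fun hmem' => hsr hmem'.1.2
      rw [Set.indicator_of_notMem h1]
      simp only [hg]
      rw [Set.indicator_of_notMem (fun hm => hsr (hmem.mp hm))]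
      simp
  have hSsub : S ⊆ polarCoord.target := by
    rw [polarCoord_target]
    exact Set.prod_mono (Ioo_subset_Ioi_self) (subset_rfl)
  have htargetS : ∫ p in polarCoord.target, p.1 • g (Complex.polarCoord.symm p) = ∫ p in S, k p := by
    rw [setIntegral_congr_fun polarCoord.open_target.measurableSet hcongr,
      setIntegral_indicator ((measurableSet_Ioo.prod measurableSet_Ioo) : MeasurableSet S),
      Set.inter_eq_self_of_subset_right hSsub]
  -- integrability of k on S
  have hkcont : ContinuousOn k (Icc 0 r ×ˢ Icc (-π) π) := by
    have hcm : Continuous (fun p : ℝ × ℝ => circleMap c p.1 p.2) := by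
      have : Continuous (fun p : ℝ × ℝ => c + (p.1 : ℂ) * Complex.exp ((p.2 : ℂ) * Complex.I)) :=
        continuous_const.add ((Complex.continuous_ofReal.comp continuous_fst).mul
          (Complex.continuous_exp.comp ((Complex.continuous_ofReal.comp continuous_snd).mul
            continuous_const)))
      exact this
    have hmaps : MapsTo (fun p : ℝ × ℝ => circleMap c p.1 p.2) (Icc 0 r ×ˢ Icc (-π) π)
        (closedBall c r) := by
      intro p hp
      exact closedBall_subset_closedBall hp.1.2 (circleMap_mem_closedBall c hp.1.1 p.2)
    have : ContinuousOn (fun p : ℝ × ℝ => ‖f (circleMap c p.1 p.2)‖ ^ 2)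
        (Icc 0 r ×ˢ Icc (-π) π) :=
      ((continuous_norm.comp_continuousOn (hfc.comp hcm.continuousOn hmaps)).pow 2)
    exact (continuous_fst.continuousOn).mul this
  have hTk : IntegrableOn k (Icc 0 r ×ˢ Icc (-π) π) :=
    hkcont.integrableOn_compact (isCompact_Icc.prod isCompact_Icc)
  have hSk : IntegrableOn k S :=
    hTk.mono_set (Set.prod_mono Ioo_subset_Icc_self Ioo_subset_Icc_self)
  -- Fubini
  have hprodmeas : (volume : Measure (ℝ × ℝ)).restrict S
      = ((volume : Measure ℝ).restrict (Ioo 0 r)).prod ((volume : Measure ℝ).restrict (Ioo (-π) π)) := by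
    rw [hS, Measure.volume_eq_prod, ← Measure.prod_restrict]
  have hSkp : Integrable k (((volume : Measure ℝ).restrict (Ioo 0 r)).prod
      ((volume : Measure ℝ).restrict (Ioo (-π) π))) := by
    rw [← hprodmeas]; exact hSk
  have hfub : ∫ p in S, k p = ∫ s in Ioo (0:ℝ) r, ∫ θ in Ioo (-π) π, k (s, θ) := by
    rw [show (∫ p in S, k p) = ∫ p, k p ∂((volume : Measure (ℝ × ℝ)).restrict S) from rfl,
      hprodmeas]
    exact integral_prod k hSkp
  -- inner bound via circle submean
  have hinner : ∀ s ∈ Ioo (0:ℝ) r, (2*π*‖f c‖^2) * s ≤ ∫ θ in Ioo (-π) π, k (s, θ) := by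
    intro s hs
    have hsub : closedBall c s ⊆ U := (closedBall_subset_closedBall hs.2.le).trans hball
    have hcsub := circle_submean_sq hs.1 (hf.continuousOn.mono hsub)
      (fun z hz => hf.differentiableAt (hU.mem_nhds (hsub (ball_subset_closedBall hz))))
    have hqper : Function.Periodic (fun θ => ‖f (circleMap c s θ)‖^2) (2*π) :=
      (periodic_circleMap c s).comp (fun z => ‖f z‖^2)
    have heq : ∫ θ in Ioo (-π) π, k (s, θ)
        = s * ∫ θ in (0:ℝ)..(2*π), ‖f (circleMap c s θ)‖^2 := by
      rw [show (fun θ => k (s, θ)) = fun θ => s * ‖f (circleMap c s θ)‖^2 from rfl]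
      rw [MeasureTheory.integral_const_mul]
      congr 1
      rw [← integral_Ioc_eq_integral_Ioo,
        ← intervalIntegral.integral_of_le (by linarith [Real.pi_pos] : -π ≤ π)]
      have h2 := hqper.intervalIntegral_add_eq (-π) 0
      norm_num at h2
      rw [show -π + 2*π = π by ring] at h2
      exact h2
    rw [heq]
    calc (2*π*‖f c‖^2) * s = s * (‖f c‖^2 * (2*π)) := by ring
      _ ≤ s * ∫ θ in (0:ℝ)..(2*π), ‖f (circleMap c s θ)‖^2 :=
          mul_le_mul_of_nonneg_left hcsub hs.1.le
  -- compare integrals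
  have hlow_int : IntegrableOn (fun s => (2*π*‖f c‖^2) * s) (Ioo 0 r) :=
    ((continuous_const.mul continuous_id).integrableOn_Icc).mono_set Ioo_subset_Icc_self
  have houter_int : IntegrableOn (fun s => ∫ θ in Ioo (-π) π, k (s, θ)) (Ioo 0 r) :=
    hSkp.integral_prod_left
  have hmono := setIntegral_mono_on hlow_int houter_int measurableSet_Ioo hinner
  have hlowval : ∫ s in Ioo (0:ℝ) r, (2*π*‖f c‖^2) * s
      = ‖f c‖^2 * (π * r^2) := by
    rw [MeasureTheory.integral_const_mul, ← integral_Ioc_eq_integral_Ioo,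
      ← intervalIntegral.integral_of_le hr.le, integral_id]
    ring
  have hfinal : ∫ w in ball c r, h w = ∫ s in Ioo (0:ℝ) r, ∫ θ in Ioo (-π) π, k (s, θ) := by
    rw [← hgint, ← hpolar, htargetS, hfub]
  calc ‖f c‖ ^ 2 * (π * r ^ 2)
      = ∫ s in Ioo (0:ℝ) r, (2*π*‖f c‖^2) * s := hlowval.symm
    _ ≤ ∫ s in Ioo (0:ℝ) r, ∫ θ in Ioo (-π) π, k (s, θ) := hmono
    _ = ∫ w in ball c r, h w := hfinal.symm


open Filter in
theorem holomorphic_L2_closed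
    (U : Set ℂ) (hU : IsOpen U)
    (α : ℂ → ℝ) (hα : ContinuousOn α U) (hαpos : ∀ z ∈ U, 0 < α z)
    (Fn : ℕ → ℂ → ℂ) (F : ℂ → ℂ)
    (hFn : ∀ n, DifferentiableOn ℂ (Fn n) U)
    (hFnL2 : ∀ n, IntegrableOn (fun w => ‖Fn n w‖ ^ 2 * α w) U)
    (hFL2 : IntegrableOn (fun w => ‖F w‖ ^ 2 * α w) U)
    (hdiffL2 : ∀ n, IntegrableOn (fun w => ‖Fn n w - F w‖ ^ 2 * α w) U)
    (hconv : Filter.Tendsto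
      (fun n => ∫ w in U, ‖Fn n w - F w‖ ^ 2 * α w)
      Filter.atTop (nhds 0)) :
    ∃ G : ℂ → ℂ, DifferentiableOn ℂ G U ∧
      ∀ᵐ w ∂(volume.restrict U), F w = G w := by
  classical
  have hUm : MeasurableSet U := hU.measurableSet
  have hFnc : ∀ n, ContinuousOn (Fn n) U := fun n => (hFn n).continuousOn
  have hαae : ∀ᵐ w ∂(volume.restrict U), 0 ≤ α w := by
    filter_upwards [ae_restrict_mem hUm] with w hw
    exact (hαpos w hw).le
  -- integrability of pairwise differences
  have hsqb : ∀ (x y z : ℂ), ‖x - y‖ ^ 2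
      ≤ 2 * ‖x - z‖ ^ 2 + 2 * ‖y - z‖ ^ 2 := by
    intro x y z
    have h1 : ‖x - y‖ ≤ ‖x - z‖ + ‖y - z‖ := by
      have hxy : x - y = (x - z) - (y - z) := by ring
      rw [hxy]
      exact norm_sub_le _ _
    nlinarith [norm_nonneg (x - y), norm_nonneg (x - z), norm_nonneg (y - z),
      sq_nonneg (‖x - z‖ - ‖y - z‖),
      mul_self_le_mul_self (norm_nonneg (x - y)) h1]
  have hnm : ∀ n m, IntegrableOn (fun w => ‖Fn n w - Fn m w‖ ^ 2 * α w) U := by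
    intro n m
    have hcont : ContinuousOn (fun w => ‖Fn n w - Fn m w‖ ^ 2 * α w) U :=
      ((continuous_norm.comp_continuousOn ((hFnc n).sub (hFnc m))).pow 2).mul hα
    refine Integrable.mono' (((hdiffL2 n).const_mul 2).add ((hdiffL2 m).const_mul 2))
      (hcont.aestronglyMeasurable hUm) ?_
    filter_upwards [ae_restrict_mem hUm] with w hw
    have hαw : 0 ≤ α w := (hαpos w hw).le
    simp only [Pi.add_apply]
    rw [Real.norm_eq_abs, _root_.abs_of_nonneg (by positivity)]
    have h2 := hsqb (Fn n w) (Fn m w) (F w)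
    calc ‖Fn n w - Fn m w‖ ^ 2 * α w
        ≤ (2 * ‖Fn n w - F w‖ ^ 2 + 2 * ‖Fn m w - F w‖ ^ 2) * α w :=
          mul_le_mul_of_nonneg_right h2 hαw
      _ = 2 * (‖Fn n w - F w‖ ^ 2 * α w)
          + 2 * (‖Fn m w - F w‖ ^ 2 * α w) := by ring
  -- weighted L² Cauchy property
  have hIcauchy : ∀ ε > (0:ℝ), ∃ N, ∀ n ≥ N, ∀ m ≥ N,
      (∫ w in U, ‖Fn n w - Fn m w‖ ^ 2 * α w) < ε := by
    intro ε hε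
    obtain ⟨N, hN⟩ := (Metric.tendsto_atTop.mp hconv) (ε/4) (by linarith)
    refine ⟨N, fun n hn m hm => ?_⟩
    have hbound : (∫ w in U, ‖Fn n w - Fn m w‖ ^ 2 * α w)
        ≤ ∫ w in U, (2 * (‖Fn n w - F w‖ ^ 2 * α w)
            + 2 * (‖Fn m w - F w‖ ^ 2 * α w)) := by
      refine integral_mono_ae (hnm n m)
        (((hdiffL2 n).const_mul 2).add ((hdiffL2 m).const_mul 2)) ?_
      filter_upwards [ae_restrict_mem hUm] with w hw
      have hαw : 0 ≤ α w := (hαpos w hw).le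
      have h2 := hsqb (Fn n w) (Fn m w) (F w)
      calc ‖Fn n w - Fn m w‖ ^ 2 * α w
          ≤ (2 * ‖Fn n w - F w‖ ^ 2 + 2 * ‖Fn m w - F w‖ ^ 2) * α w :=
            mul_le_mul_of_nonneg_right h2 hαw
        _ = 2 * (‖Fn n w - F w‖ ^ 2 * α w)
            + 2 * (‖Fn m w - F w‖ ^ 2 * α w) := by ring
    rw [MeasureTheory.integral_add ((hdiffL2 n).const_mul 2) ((hdiffL2 m).const_mul 2),
      MeasureTheory.integral_const_mul, MeasureTheory.integral_const_mul] at hbound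
    have hn' := hN n hn
    have hm' := hN m hm
    rw [Real.dist_eq, sub_zero] at hn' hm'
    have h1 := (abs_lt.mp hn').2
    have h2 := (abs_lt.mp hm').2
    linarith
  -- local uniform Cauchy property
  have hUC : ∀ z₀ ∈ U, ∃ r > (0:ℝ), closedBall z₀ r ⊆ U ∧
      UniformCauchySeqOn (fun n => Fn n) Filter.atTop (closedBall z₀ r) := by
    intro z₀ hz₀
    obtain ⟨R, hR, hRU⟩ := Metric.isOpen_iff.mp hU z₀ hz₀
    set r := R/3 with hrdef
    have hr : 0 < r := by positivity
    have hsub2 : closedBall z₀ (2*r) ⊆ U := by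
      intro w hw
      rw [mem_closedBall] at hw
      exact hRU (by rw [mem_ball]; rw [hrdef] at hw; linarith)
    obtain ⟨w₀, hw₀mem, hw₀min⟩ := (isCompact_closedBall z₀ (2*r)).exists_isMinOn
      (Metric.nonempty_closedBall.mpr (by positivity)) (hα.mono hsub2)
    set m := α w₀ with hmdef
    have hmpos : 0 < m := hαpos w₀ (hsub2 hw₀mem)
    have hπ := Real.pi_pos
    have hkey : ∀ n k : ℕ, ∀ z ∈ closedBall z₀ r,
        ‖Fn n z - Fn k z‖ ^ 2
          ≤ (π * r ^ 2)⁻¹ * (m⁻¹ * ∫ w in U, ‖Fn n w - Fn k w‖ ^ 2 * α w) := by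
      intro n k z hz
      rw [mem_closedBall] at hz
      have hballb : ball z r ⊆ closedBall z₀ (2*r) := by
        intro w hw
        rw [mem_ball] at hw
        rw [mem_closedBall]
        calc dist w z₀ ≤ dist w z + dist z z₀ := dist_triangle _ _ _
          _ ≤ r + r := add_le_add hw.le hz
          _ = 2*r := by ring
      have hcb2 : closedBall z r ⊆ closedBall z₀ (2*r) := by
        intro w hw
        rw [mem_closedBall] at hw ⊢
        calc dist w z₀ ≤ dist w z + dist z z₀ := dist_triangle _ _ _
          _ ≤ r + r := add_le_add hw hz
          _ = 2*r := by ring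
      have hcbU : closedBall z r ⊆ U := hcb2.trans hsub2
      have hg : DifferentiableOn ℂ (fun w => Fn n w - Fn k w) U := (hFn n).sub (hFn k)
      have hsm := ball_submean_sq hU hg hr hcbU
      have hstep1 : ∫ w in ball z r, ‖Fn n w - Fn k w‖ ^ 2
          ≤ ∫ w in ball z r, m⁻¹ * (‖Fn n w - Fn k w‖ ^ 2 * α w) := by
        refine setIntegral_mono_on ?_ ?_ measurableSet_ball ?_
        · exact (((continuous_norm.comp_continuousOn
            (hg.continuousOn.mono hcbU)).pow 2).integrableOn_compact
            (isCompact_closedBall z r)).mono_set ball_subset_closedBall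
        · exact ((hnm n k).mono_set (ball_subset_closedBall.trans hcbU)).const_mul m⁻¹
        · intro w hw
          have hαw : m ≤ α w := hw₀min (hballb hw)
          have h1 : ‖Fn n w - Fn k w‖ ^ 2 * m
              ≤ ‖Fn n w - Fn k w‖ ^ 2 * α w :=
            mul_le_mul_of_nonneg_left hαw (sq_nonneg _)
          calc ‖Fn n w - Fn k w‖ ^ 2
              = m⁻¹ * (‖Fn n w - Fn k w‖ ^ 2 * m) := by
                field_simp
            _ ≤ m⁻¹ * (‖Fn n w - Fn k w‖ ^ 2 * α w) :=
                mul_le_mul_of_nonneg_left h1 (inv_nonneg.mpr hmpos.le)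
      rw [MeasureTheory.integral_const_mul] at hstep1
      have hstep2 : (∫ w in ball z r, ‖Fn n w - Fn k w‖ ^ 2 * α w)
          ≤ ∫ w in U, ‖Fn n w - Fn k w‖ ^ 2 * α w := by
        refine setIntegral_mono_set (hnm n k) ?_
          ((ball_subset_closedBall.trans hcbU).eventuallyLE)
        filter_upwards [ae_restrict_mem hUm] with w hw
        have := (hαpos w hw).le
        positivity
      have hchain : ‖Fn n z - Fn k z‖ ^ 2 * (π * r ^ 2)
          ≤ m⁻¹ * ∫ w in U, ‖Fn n w - Fn k w‖ ^ 2 * α w :=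
        hsm.trans (hstep1.trans (mul_le_mul_of_nonneg_left hstep2 (inv_nonneg.mpr hmpos.le)))
      have hπr : (0:ℝ) < π * r ^ 2 := by positivity
      calc ‖Fn n z - Fn k z‖ ^ 2
          = (π * r ^ 2)⁻¹ * (‖Fn n z - Fn k z‖ ^ 2 * (π * r ^ 2)) := by
            field_simp
        _ ≤ (π * r ^ 2)⁻¹ * (m⁻¹ * ∫ w in U, ‖Fn n w - Fn k w‖ ^ 2 * α w) :=
            mul_le_mul_of_nonneg_left hchain (inv_nonneg.mpr hπr.le)
    refine ⟨r, hr, (closedBall_subset_closedBall (by linarith)).trans hsub2, ?_⟩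
    rw [Metric.uniformCauchySeqOn_iff]
    intro ε hε
    set δ : ℝ := (ε^2/2) * ((π * r^2) * m) with hδdef
    have hδ : 0 < δ := by positivity
    obtain ⟨N, hN⟩ := hIcauchy δ hδ
    refine ⟨N, fun n hn k hk z hz => ?_⟩
    have hI := hN n hn k hk
    have hest := hkey n k z hz
    have hπr : (0:ℝ) < π * r ^ 2 := by positivity
    have hsq : ‖Fn n z - Fn k z‖ ^ 2 < ε ^ 2 := by
      have h2 : (π * r ^ 2)⁻¹ * (m⁻¹ * ∫ w in U, ‖Fn n w - Fn k w‖ ^ 2 * α w)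
          < (π * r ^ 2)⁻¹ * (m⁻¹ * δ) := by
        apply mul_lt_mul_of_pos_left _ (inv_pos.mpr hπr)
        exact mul_lt_mul_of_pos_left hI (inv_pos.mpr hmpos)
      have h3 : (π * r ^ 2)⁻¹ * (m⁻¹ * δ) = ε^2/2 := by
        rw [hδdef]; field_simp
      calc ‖Fn n z - Fn k z‖ ^ 2
          ≤ (π * r ^ 2)⁻¹ * (m⁻¹ * ∫ w in U, ‖Fn n w - Fn k w‖ ^ 2 * α w) := hest
        _ < (π * r ^ 2)⁻¹ * (m⁻¹ * δ) := h2
        _ = ε^2/2 := h3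
        _ < ε^2 := by nlinarith
    rw [Complex.dist_eq]
    exact lt_of_pow_lt_pow_left₀ 2 hε.le hsq
  -- pointwise limit G
  set G : ℂ → ℂ := fun z => limUnder Filter.atTop (fun n => Fn n z) with hGdef
  have hcauchy : ∀ z ∈ U, CauchySeq (fun n => Fn n z) := by
    intro z hz
    obtain ⟨r, hr, hsubU, hUCz⟩ := hUC z hz
    rw [Metric.cauchySeq_iff]
    intro ε hε
    obtain ⟨N, hN⟩ := Metric.uniformCauchySeqOn_iff.mp hUCz ε hε
    exact ⟨N, fun a ha b hb => hN a ha b hb z (mem_closedBall_self hr.le)⟩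
  have hGtend : ∀ z ∈ U, Filter.Tendsto (fun n => Fn n z) Filter.atTop (nhds (G z)) :=
    fun z hz => (hcauchy z hz).tendsto_limUnder
  have hLU : TendstoLocallyUniformlyOn (fun n => Fn n) G Filter.atTop U := by
    intro u hu z hz
    obtain ⟨r, hr, hsubU, hUCz⟩ := hUC z hz
    have hTU : TendstoUniformlyOn (fun n => Fn n) G Filter.atTop (closedBall z r) :=
      hUCz.tendstoUniformlyOn_of_tendsto (fun w hw => hGtend w (hsubU hw))
    exact ⟨closedBall z r, mem_nhdsWithin_of_mem_nhds (closedBall_mem_nhds z hr), hTU u hu⟩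
  have hGdiff : DifferentiableOn ℂ G U :=
    hLU.differentiableOn (Filter.Eventually.of_forall hFn) hU
  refine ⟨G, hGdiff, ?_⟩
  -- Fatou argument
  set φ : ℕ → ℂ → ENNReal :=
    fun n w => ENNReal.ofReal (‖Fn n w - F w‖ ^ 2 * α w) with hφdef
  have hφmeas : ∀ n, AEMeasurable (φ n) (volume.restrict U) := fun n =>
    ENNReal.measurable_ofReal.comp_aemeasurable
      (hdiffL2 n).aestronglyMeasurable.aemeasurable
  have hφnonneg : ∀ n, 0 ≤ᵐ[volume.restrict U]
      fun w => ‖Fn n w - F w‖ ^ 2 * α w := by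
    intro n
    filter_upwards [hαae] with w hw
    positivity
  have hφint : ∀ n, (∫⁻ w in U, φ n w)
      = ENNReal.ofReal (∫ w in U, ‖Fn n w - F w‖ ^ 2 * α w) :=
    fun n => (ofReal_integral_eq_lintegral_ofReal (hdiffL2 n) (hφnonneg n)).symm
  have hliminf0 : (∫⁻ w in U, Filter.atTop.liminf (fun n => φ n w)) = 0 := by
    refine le_antisymm ?_ zero_le
    refine le_trans (lintegral_liminf_le' hφmeas) ?_
    have htd : Filter.Tendsto (fun n => ∫⁻ w in U, φ n w) Filter.atTop (nhds 0) := by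
      simp_rw [hφint]
      have := ENNReal.tendsto_ofReal hconv
      simpa using this
    rw [htd.liminf_eq]
  set φ' : ℕ → ℂ → ENNReal := fun n => (hφmeas n).mk (φ n) with hφ'def
  have hae : ∀ᵐ w ∂(volume.restrict U), ∀ n, φ n w = φ' n w :=
    ae_all_iff.mpr fun n => (hφmeas n).ae_eq_mk
  have haeliminf : (fun w => Filter.atTop.liminf (fun n => φ n w))
      =ᵐ[volume.restrict U] (fun w => Filter.atTop.liminf (fun n => φ' n w)) := by
    filter_upwards [hae] with w hw
    rw [show (fun n => φ n w) = fun n => φ' n w from funext hw]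
  have h0' : (∫⁻ w in U, Filter.atTop.liminf (fun n => φ' n w)) = 0 := by
    rw [← lintegral_congr_ae haeliminf]
    exact hliminf0
  have hzero : ∀ᵐ w ∂(volume.restrict U), Filter.atTop.liminf (fun n => φ' n w) = 0 := by
    have hm' : Measurable fun w => Filter.atTop.liminf (fun n => φ' n w) :=
      Measurable.liminf fun n => (hφmeas n).measurable_mk
    exact (lintegral_eq_zero_iff hm').mp h0'
  filter_upwards [hzero, hae, ae_restrict_mem hUm] with w hw0 hwae hwU
  have htend : Filter.Tendsto (fun n => φ n w) Filter.atTop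
      (nhds (ENNReal.ofReal (‖G w - F w‖ ^ 2 * α w))) := by
    apply Filter.Tendsto.comp (ENNReal.continuous_ofReal.tendsto _)
    have h1 : Filter.Tendsto (fun n => Fn n w) Filter.atTop (nhds (G w)) := hGtend w hwU
    have hcont : Continuous fun x : ℂ => ‖x - F w‖ ^ 2 * α w :=
      ((continuous_norm.comp (continuous_id.sub continuous_const)).pow 2).mul
        continuous_const
    exact (hcont.tendsto (G w)).comp h1
  have hliminfw : Filter.atTop.liminf (fun n => φ n w)
      = ENNReal.ofReal (‖G w - F w‖ ^ 2 * α w) := htend.liminf_eq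
  have hlim0 : Filter.atTop.liminf (fun n => φ n w) = 0 := by
    rw [show (fun n => φ n w) = fun n => φ' n w from funext hwae]
    exact hw0
  have h2 : ‖G w - F w‖ ^ 2 * α w ≤ 0 :=
    ENNReal.ofReal_eq_zero.mp (hliminfw ▸ hlim0)
  have hαw := hαpos w hwU
  have h3 : ‖G w - F w‖ = 0 := by
    by_contra hne
    have hpos : 0 < ‖G w - F w‖ :=
      lt_of_le_of_ne (norm_nonneg _) (Ne.symm hne)
    nlinarith [mul_pos (pow_pos hpos 2) hαw]
  have h4 : G w - F w = 0 := by
    rwa [norm_eq_zero] at h3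
  have : G w = F w := by linear_combination h4
  exact this.symm
end

section
/- For every entire function F : ℂ → ℂ with ∫_ℂ |F(w)|² (πt)⁻¹ e^{−|w|²/t} dA(w) < ∞ and every z ∈ ℂ, the reproducing identity F(z) = ∫_ℂ e^{z·conj(w)/t} F(w) (πt)⁻¹ e^{−|w|²/t} dA(w) holds. -/
set_option maxHeartbeats 1000000
open MeasureTheory Real Set Complex

theorem my_integrableOn_polar {E : Type*} [NormedAddCommGroup E] [NormedSpace ℝ E]
    {f : ℝ × ℝ → E} (hf : Integrable f) :
    IntegrableOn (fun p => p.1 • f (polarCoord.symm p)) polarCoord.target := by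
  set B : ℝ × ℝ → ℝ × ℝ →L[ℝ] ℝ × ℝ := fun p =>
    LinearMap.toContinuousLinearMap (Matrix.toLin (Module.Basis.finTwoProd ℝ) (Module.Basis.finTwoProd ℝ)
      !![Real.cos p.2, -p.1 * Real.sin p.2; Real.sin p.2, p.1 * Real.cos p.2])
  have A : ∀ p ∈ polarCoord.target, HasFDerivWithinAt polarCoord.symm (B p) polarCoord.target p :=
    fun p _ => (hasFDerivAt_polarCoord_symm p).hasFDerivWithinAt
  have B_det : ∀ p ∈ polarCoord.target, |(B p).det| = p.1 := by
    intro p hp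
    have h1 : (B p).det = p.1 := by
      conv_rhs => rw [← one_mul p.1, ← Real.cos_sq_add_sin_sq p.2]
      simp only [B, neg_mul, LinearMap.det_toContinuousLinearMap, LinearMap.det_toLin,
        Matrix.det_fin_two_of, sub_neg_eq_add]
      ring
    rw [h1, abs_of_pos hp.1]
  have hinj : InjOn polarCoord.symm polarCoord.target := by
    have := polarCoord.symm.injOn
    rwa [OpenPartialHomeomorph.symm_source] at this
  have himg : polarCoord.symm '' polarCoord.target = polarCoord.source :=
    polarCoord.symm_image_target_eq_source
  have h1 : IntegrableOn f polarCoord.source := hf.integrableOn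
  rw [← himg, integrableOn_image_iff_integrableOn_abs_det_fderiv_smul volume
    polarCoord.open_target.measurableSet A hinj f] at h1
  exact h1.congr_fun (fun p hp => by dsimp only; rw [B_det p hp]) polarCoord.open_target.measurableSet

theorem my_integrableOn_polar_complex {E : Type*} [NormedAddCommGroup E] [NormedSpace ℝ E]
    {f : ℂ → E} (hf : Integrable f) :
    IntegrableOn (fun p : ℝ × ℝ => p.1 • f (Complex.polarCoord.symm p)) polarCoord.target := by
  have h0 : Integrable (f ∘ Complex.measurableEquivRealProd.symm) :=
    ((Complex.volume_preserving_equiv_real_prod.symm Complex.measurableEquivRealProd).integrable_comp_emb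
      Complex.measurableEquivRealProd.symm.measurableEmbedding).mpr hf
  refine (my_integrableOn_polar h0).congr_fun (fun p _ => ?_) polarCoord.open_target.measurableSet
  simp only [Function.comp_apply]
  congr 1

theorem my_circle_avg (H : ℂ → ℂ) (hH : Differentiable ℂ H) {r : ℝ} (hr : 0 < r) :
    ∫ θ in Set.Ioo (-π) π, H (circleMap 0 r θ) = (2 * π) * H 0 := by
  have h1 : (∮ z in C(0, r), (z - 0)⁻¹ • H z) = (2 * ↑π * Complex.I) • H 0 :=
    (hH.differentiableOn).circleIntegral_sub_inv_smul (Metric.mem_ball_self hr)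
  rw [circleIntegral] at h1
  simp only [deriv_circleMap, sub_zero, smul_eq_mul] at h1
  have h2 : ∀ θ ∈ Set.uIcc (0:ℝ) (2*π),
      circleMap 0 r θ * Complex.I * ((circleMap 0 r θ)⁻¹ * H (circleMap 0 r θ))
      = Complex.I * H (circleMap 0 r θ) := by
    intro θ _
    have hne : circleMap 0 r θ ≠ 0 := circleMap_ne_center hr.ne'
    field_simp
  rw [intervalIntegral.integral_congr h2, intervalIntegral.integral_const_mul] at h1
  have h3 : ∫ θ in (0:ℝ)..(2*π), H (circleMap 0 r θ) = 2 * π * H 0 := by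
    apply mul_left_cancel₀ Complex.I_ne_zero
    rw [h1]
    ring
  have hper : Function.Periodic (fun θ => H (circleMap 0 r θ)) (2*π) :=
    (periodic_circleMap 0 r).comp H
  have h4 : ∫ θ in (-π)..π, H (circleMap 0 r θ) = ∫ θ in (0:ℝ)..(2*π), H (circleMap 0 r θ) := by
    have := hper.intervalIntegral_add_eq (-π) 0
    simpa [zero_add, (by ring : -π + 2*π = π)] using this
  rw [← integral_Ioc_eq_integral_Ioo, ← intervalIntegral.integral_of_le
    (by linarith [Real.pi_pos] : -π ≤ π), h4, h3]

theorem gaussian_mvp (t : ℝ) (ht : 0 < t) (H : ℂ → ℂ) (hH : Differentiable ℂ H)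
    (hint : Integrable (fun u : ℂ => H u * ((Real.exp (-(‖u‖) ^ 2 / t) : ℝ) : ℂ))) :
    ∫ u : ℂ, H u * ((Real.exp (-(‖u‖) ^ 2 / t) : ℝ) : ℂ) = ((π * t : ℝ) : ℂ) * H 0 := by
  have ht' : (t : ℂ) ≠ 0 := Complex.ofReal_ne_zero.mpr ht.ne'
  have hfOn := my_integrableOn_polar_complex hint
  have heq : ∀ p ∈ polarCoord.target,
      p.1 • ((fun u : ℂ => H u * ((rexp (-(‖u‖) ^ 2 / t) : ℝ) : ℂ))
        (Complex.polarCoord.symm p))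
      = ((p.1 * rexp (-p.1 ^ 2 / t) : ℝ) : ℂ) * H (circleMap 0 p.1 p.2) := by
    intro p hp
    have h0 : (0:ℝ) < p.1 := hp.1
    have hcm : Complex.polarCoord.symm p = circleMap 0 p.1 p.2 := by
      rw [Complex.polarCoord_symm_apply]
      simp [circleMap, Complex.exp_mul_I]
    simp only [hcm, norm_circleMap_zero, abs_of_pos h0]
    push_cast
    rw [Complex.real_smul]
    ring
  rw [← Complex.integral_comp_polarCoord_symm]
  calc ∫ p in polarCoord.target,
        p.1 • ((fun u : ℂ => H u * ((rexp (-(‖u‖) ^ 2 / t) : ℝ) : ℂ))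
          (Complex.polarCoord.symm p))
      = ∫ p in Set.Ioi (0:ℝ) ×ˢ Set.Ioo (-π) π,
          ((p.1 * rexp (-p.1 ^ 2 / t) : ℝ) : ℂ) * H (circleMap 0 p.1 p.2) := by
        rw [show Set.Ioi (0:ℝ) ×ˢ Set.Ioo (-π) π = polarCoord.target from rfl]
        exact setIntegral_congr_fun polarCoord.open_target.measurableSet heq
    _ = ∫ x in Set.Ioi (0:ℝ), ∫ y in Set.Ioo (-π) π,
          ((x * rexp (-x ^ 2 / t) : ℝ) : ℂ) * H (circleMap 0 x y) := by
        rw [Measure.volume_eq_prod]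
        apply setIntegral_prod
        rw [show Set.Ioi (0:ℝ) ×ˢ Set.Ioo (-π) π = polarCoord.target from rfl]
        exact hfOn.congr_fun heq polarCoord.open_target.measurableSet
    _ = ∫ x in Set.Ioi (0:ℝ), ((x * rexp (-x ^ 2 / t) : ℝ) : ℂ) * (2 * π * H 0) := by
        apply setIntegral_congr_fun measurableSet_Ioi
        intro x hx
        dsimp only
        rw [MeasureTheory.integral_const_mul, my_circle_avg H hH hx]
    _ = (∫ x in Set.Ioi (0:ℝ), ((x * rexp (-x ^ 2 / t) : ℝ) : ℂ)) * (2 * π * H 0) :=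
        integral_mul_const _ _
    _ = ((t : ℂ)/2) * (2 * π * H 0) := by
        have h := integral_mul_cexp_neg_mul_sq (b := ((t⁻¹ : ℝ) : ℂ))
          (by simpa using inv_pos.mpr ht)
        have h2 : ∫ x in Set.Ioi (0:ℝ), ((x * rexp (-x ^ 2 / t) : ℝ) : ℂ)
            = ∫ x in Set.Ioi (0:ℝ), (x:ℂ) * Complex.exp (-((t⁻¹:ℝ):ℂ) * (x:ℂ) ^ 2) := by
          apply setIntegral_congr_fun measurableSet_Ioi
          intro x _
          dsimp only
          rw [Complex.ofReal_mul, Complex.ofReal_exp]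
          congr 2
          push_cast
          ring
        rw [h2, h]
        rw [Complex.ofReal_inv]
        field_simp
    _ = ((π * t : ℝ) : ℂ) * H 0 := by push_cast; ring

theorem segal_bargmann_reproducing
    (t : ℝ) (ht : 0 < t) (F : ℂ → ℂ) (hF : Differentiable ℂ F)
    (hL2 : Integrable (fun w => ‖F w‖ ^ 2 *
      ((Real.pi * t)⁻¹ * Real.exp (-(‖w‖) ^ 2 / t)))) :
    ∀ z : ℂ, F z = ∫ w : ℂ,
      Complex.exp (z * (starRingEnd ℂ) w / (t : ℂ)) * F w *
        ((((Real.pi * t)⁻¹ * Real.exp (-(‖w‖) ^ 2 / t)) : ℝ) : ℂ) := by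
  intro z
  have hπt : (0:ℝ) < π * t := mul_pos Real.pi_pos ht
  have ht' : (t:ℂ) ≠ 0 := Complex.ofReal_ne_zero.mpr ht.ne'
  set I : ℂ → ℂ := fun w => Complex.exp (z * (starRingEnd ℂ) w / (t : ℂ)) * F w *
      ((((Real.pi * t)⁻¹ * Real.exp (-(‖w‖) ^ 2 / t)) : ℝ) : ℂ) with hIdef
  have hIc : Continuous I := by
    apply Continuous.mul
    apply Continuous.mul
    · exact Complex.continuous_exp.comp
        ((continuous_const.mul (Complex.continuous_conj)).div_const _)
    · exact hF.continuous
    · exact Complex.continuous_ofReal.comp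
        (continuous_const.mul
          (Real.continuous_exp.comp ((continuous_norm.pow 2).neg.div_const t)))
  -- Gaussian with doubled variance is integrable
  have hb : (0:ℝ) < (2*t)⁻¹ := by positivity
  have gauss2 : Integrable (fun w : ℂ => rexp (-(2*t)⁻¹ * (‖w‖)^2)) := by
    have h1 : Integrable (fun p : ℝ × ℝ => rexp (-(2*t)⁻¹ * p.1^2) * rexp (-(2*t)⁻¹ * p.2^2)) := by
      have := (integrable_exp_neg_mul_sq hb).mul_prod (integrable_exp_neg_mul_sq hb)
      rwa [← Measure.volume_eq_prod] at this
    have h2 := (Complex.volume_preserving_equiv_real_prod.integrable_comp_emb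
        Complex.measurableEquivRealProd.measurableEmbedding).mpr h1
    apply h2.congr
    filter_upwards with w
    simp only [Function.comp_apply, Complex.measurableEquivRealProd_apply]
    rw [← Real.exp_add, Complex.sq_norm, Complex.normSq_apply]
    congr 1
    ring
  set K : ℝ := rexp ((2 * ‖z‖ / t)^2 * t / 2) with hK
  set maj : ℂ → ℝ := fun w => 2⁻¹ * (‖F w‖ ^ 2 *
      ((Real.pi * t)⁻¹ * Real.exp (-(‖w‖) ^ 2 / t)))
    + 2⁻¹ * (π*t)⁻¹ * K * rexp (-(2*t)⁻¹ * (‖w‖)^2) with hmajdef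
  have hmaj : Integrable maj := (hL2.const_mul 2⁻¹).add (gauss2.const_mul (2⁻¹ * (π*t)⁻¹ * K))
  have hI : Integrable I := by
    apply hmaj.mono' hIc.aestronglyMeasurable
    filter_upwards with w
    have h1 : ‖I w‖ = rexp ((z * (starRingEnd ℂ) w / (t:ℂ)).re) * ‖F w‖ *
        ((π*t)⁻¹ * rexp (-(‖w‖)^2/t)) := by
      simp only [hIdef, norm_mul, Complex.norm_exp, Complex.norm_real, Real.norm_eq_abs]
      rw [← abs_mul, _root_.abs_of_nonneg (by positivity : (0:ℝ) ≤ (π*t)⁻¹ * rexp (-(‖w‖)^2/t))]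
    have h2 : (z * (starRingEnd ℂ) w / (t:ℂ)).re ≤ ‖z‖ * ‖w‖ / t := by
      calc (z * (starRingEnd ℂ) w / (t:ℂ)).re ≤ ‖z * (starRingEnd ℂ) w / (t:ℂ)‖ :=
            Complex.re_le_norm _
        _ = ‖z‖ * ‖w‖ / t := by
            rw [norm_div, norm_mul, Complex.norm_conj, Complex.norm_real, Real.norm_eq_abs, abs_of_pos ht]
    set a := ‖z‖ with ha
    set r := ‖w‖ with hr
    set fa := ‖F w‖ with hfa
    have hfa0 : 0 ≤ fa := norm_nonneg _
    have har : 0 ≤ a * r / t := by positivity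
    have h3 : rexp ((z * (starRingEnd ℂ) w / (t:ℂ)).re) ≤ rexp (a * r / t) :=
      Real.exp_le_exp.mpr h2
    have hamgm : rexp (a * r / t) * fa ≤ 2⁻¹ * fa^2 + 2⁻¹ * rexp (2 * a * r / t) := by
      have hsq : rexp (2 * a * r / t) = rexp (a * r / t) * rexp (a * r / t) := by
        rw [← Real.exp_add]; congr 1; ring
      nlinarith [sq_nonneg (fa - rexp (a * r / t))]
    have hgauss : rexp (2 * a * r / t) * rexp (-r^2/t) ≤ K * rexp (-(2*t)⁻¹ * r^2) := by
      rw [hK, ← Real.exp_add, ← Real.exp_add]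
      apply Real.exp_le_exp.mpr
      have expand : ((2 * a / t)^2 * t / 2 + -(2*t)⁻¹ * r^2) - (2 * a * r / t + -r^2/t) =
          (2 / t) * (a - r/2)^2 := by field_simp; ring
      have h6 : (0:ℝ) ≤ (2 / t) * (a - r/2)^2 := by positivity
      linarith [expand]
    have hμpos : (0:ℝ) < (π*t)⁻¹ * rexp (-r^2/t) := by positivity
    rw [h1]
    calc rexp ((z * (starRingEnd ℂ) w / (t:ℂ)).re) * fa * ((π*t)⁻¹ * rexp (-r^2/t))
        ≤ rexp (a * r / t) * fa * ((π*t)⁻¹ * rexp (-r^2/t)) := by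
          apply mul_le_mul_of_nonneg_right (mul_le_mul_of_nonneg_right h3 hfa0) hμpos.le
      _ ≤ (2⁻¹ * fa^2 + 2⁻¹ * rexp (2 * a * r / t)) * ((π*t)⁻¹ * rexp (-r^2/t)) :=
          mul_le_mul_of_nonneg_right hamgm hμpos.le
      _ = 2⁻¹ * (fa^2 * ((π*t)⁻¹ * rexp (-r^2/t)))
            + 2⁻¹ * (π*t)⁻¹ * (rexp (2 * a * r / t) * rexp (-r^2/t)) := by ring
      _ ≤ 2⁻¹ * (fa^2 * ((π*t)⁻¹ * rexp (-r^2/t)))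
            + 2⁻¹ * (π*t)⁻¹ * (K * rexp (-(2*t)⁻¹ * r^2)) := by
          have h5 : (0:ℝ) ≤ 2⁻¹ * (π*t)⁻¹ := by positivity
          nlinarith [mul_le_mul_of_nonneg_left hgauss h5]
      _ = maj w := by rw [hmajdef]; ring
  -- key algebraic identity
  have e : ∀ u : ℂ, ((‖u‖ : ℝ) : ℂ)^2 = u * (starRingEnd ℂ) u := fun u => by
    rw [← Complex.ofReal_pow, Complex.sq_norm, Complex.mul_conj]
  set C : ℂ := (((Real.pi * t)⁻¹ : ℝ) : ℂ) * Complex.exp ((((‖z‖)^2 / t : ℝ)) : ℂ)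
    with hCdef
  set h : ℂ → ℂ := fun w => F w * Complex.exp (-((starRingEnd ℂ) z * w) / t) *
      ((rexp (-(‖w - z‖)^2 / t) : ℝ) : ℂ) with hhdef
  have hexp : ∀ w : ℂ, Complex.exp (z * (starRingEnd ℂ) w / (t:ℂ)) *
      ((rexp (-(‖w‖)^2 / t) : ℝ) : ℂ)
      = Complex.exp ((((‖z‖)^2 / t : ℝ)) : ℂ) *
        (Complex.exp (-((starRingEnd ℂ) z * w) / t) *
          ((rexp (-(‖w - z‖)^2 / t) : ℝ) : ℂ)) := by
    intro w
    rw [Complex.ofReal_exp, Complex.ofReal_exp, ← Complex.exp_add, ← Complex.exp_add,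
      ← Complex.exp_add]
    congr 1
    have e1 := e w
    have e2 := e z
    have e3 := e (w - z)
    rw [show (starRingEnd ℂ) (w - z) = (starRingEnd ℂ) w - (starRingEnd ℂ) z
      from map_sub _ _ _] at e3
    push_cast
    linear_combination (1/(t:ℂ)) * e3 - (1/(t:ℂ)) * e1 - (1/(t:ℂ)) * e2
  have key : ∀ w : ℂ, I w = C * h w := by
    intro w
    rw [hIdef, hCdef, hhdef]
    dsimp only
    rw [Complex.ofReal_mul]
    linear_combination ((((Real.pi * t)⁻¹ : ℝ) : ℂ) * F w) * hexp w
  have hC0 : C ≠ 0 := by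
    apply mul_ne_zero
    · exact Complex.ofReal_ne_zero.mpr (by positivity)
    · exact Complex.exp_ne_zero _
  have hInt_h : Integrable h := by
    have hh : ∀ w, h w = C⁻¹ * I w := fun w => by
      rw [key w, ← mul_assoc, inv_mul_cancel₀ hC0, one_mul]
    exact (hI.const_mul C⁻¹).congr (Filter.Eventually.of_forall fun w => (hh w).symm)
  set G : ℂ → ℂ := fun u => F (z + u) *
      Complex.exp (-((starRingEnd ℂ) z * (z + u)) / t) with hGdef
  have hGh : ∀ u : ℂ, h (z + u) = G u * ((rexp (-(‖u‖)^2 / t) : ℝ) : ℂ) := by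
    intro u
    rw [hhdef, hGdef]
    dsimp only
    rw [add_sub_cancel_left]
  have hG : Differentiable ℂ G := by
    apply Differentiable.mul
    · exact hF.comp (differentiable_id.const_add z)
    · exact Differentiable.cexp
        (((differentiable_const ((starRingEnd ℂ) z)).mul
          (differentiable_id.const_add z)).neg.div_const t)
  have hintG : Integrable (fun u => G u * ((rexp (-(‖u‖)^2 / t) : ℝ) : ℂ)) := by
    have h5 : Integrable (fun u => h (z + u)) := hInt_h.comp_add_left z
    exact h5.congr (Filter.Eventually.of_forall fun u => hGh u)
  have hmvp := gaussian_mvp t ht G hG hintG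
  have hswap : ∫ w, h w = ∫ u, h (z + u) := (integral_add_left_eq_self h z).symm
  have hG0 : G 0 = F z * Complex.exp (-((starRingEnd ℂ) z * z) / t) := by
    rw [hGdef]; simp
  have hone : Complex.exp ((((‖z‖)^2 / t : ℝ)) : ℂ) *
      Complex.exp (-((starRingEnd ℂ) z * z) / t) = 1 := by
    rw [← Complex.exp_add, ← Complex.exp_zero]
    congr 1
    have e2 := e z
    push_cast
    linear_combination (1/(t:ℂ)) * e2
  have hinv : ((((Real.pi * t)⁻¹ : ℝ)) : ℂ) * (((Real.pi * t : ℝ)) : ℂ) = 1 := by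
    rw [← Complex.ofReal_mul, inv_mul_cancel₀ hπt.ne', Complex.ofReal_one]
  calc F z = C * (((π * t : ℝ) : ℂ) * G 0) := by
        rw [hG0, hCdef]
        linear_combination (-((((Real.pi * t)⁻¹ : ℝ) : ℂ)) * ((π * t : ℝ) : ℂ) * F z) * hone
          - F z * hinv
    _ = C * ∫ u, h (z + u) := by
        rw [← hmvp]
        congr 1
        exact (integral_congr_ae (Filter.Eventually.of_forall fun u => (hGh u).symm))
    _ = C * ∫ w, h w := by rw [← hswap]
    _ = ∫ w, C * h w := (integral_const_mul C h).symm
    _ = ∫ w, I w := integral_congr_ae (Filter.Eventually.of_forall fun w => (key w).symm)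
end

section
/- If A and B are n×n complex matrices that both commute with their commutator [A,B], then exp(A)·exp(B) = exp(A + B + (1/2)[A,B]). -/
open NormedSpace

section Aux

variable {𝔸 : Type*} [NormedRing 𝔸] [NormedAlgebra ℂ 𝔸] [CompleteSpace 𝔸]

lemma bch_conj (X Y : 𝔸) (h : X * (X * Y - Y * X) = (X * Y - Y * X) * X) (t : ℂ) :
    exp (t • X) * Y = (Y + t • (X * Y - Y * X)) * exp (t • X) := by
  set C := X * Y - Y * X with hC
  have hd : ∀ u : ℂ, HasDerivAt
      (fun s : ℂ => exp ((-s) • X) * ((Y + s • C) * exp (s • X))) 0 u := by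
    intro u
    have d1 : HasDerivAt (fun s : ℂ => exp ((-s) • X))
        ((-1 : ℂ) • (X * exp ((-u) • X))) u := by
      have := (hasDerivAt_exp_smul_const' (𝕂 := ℂ) X (-u)).scomp u (hasDerivAt_neg u)
      simpa [Function.comp_def] using this
    have d2 : HasDerivAt (fun s : ℂ => Y + s • C) C u := by
      simpa using ((hasDerivAt_id u).smul_const C).const_add Y
    have d3 : HasDerivAt (fun s : ℂ => exp (s • X)) (X * exp (u • X)) u :=
      hasDerivAt_exp_smul_const' (𝕂 := ℂ) X u
    have total := d1.mul (d2.mul d3)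
    have hxe : X * exp ((-u) • X) = exp ((-u) • X) * X :=
      (((Commute.refl X).smul_right (-u)).exp_right).eq
    have hxc : X * C = C * X := h
    convert total using 1
    · rfl
    simp only [Pi.mul_apply]
    have expand : (-1 : ℂ) • (X * exp ((-u) • X)) * ((Y + u • C) * exp (u • X)) +
        exp ((-u) • X) * (C * exp (u • X) + (Y + u • C) * (X * exp (u • X))) =
        exp ((-u) • X) * ((-(X * (Y + u • C)) + (C + (Y + u • C) * X)) * exp (u • X)) := by
      rw [hxe]
      simp only [neg_smul, one_smul, neg_mul, mul_neg, mul_add, add_mul, mul_assoc,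
        smul_mul_assoc, mul_smul_comm, neg_add_rev, neg_one_smul, smul_smul, mul_neg_one,
        neg_one_mul, smul_neg, neg_neg]
      abel
    rw [expand]
    have mid : (-(X * (Y + u • C)) + (C + (Y + u • C) * X)) = 0 := by
      simp only [mul_add, add_mul, mul_smul_comm, smul_mul_assoc, hxc]
      rw [hC]
      abel
    rw [mid, zero_mul, mul_zero]
  have hconst : ∀ s : ℂ, exp ((-s) • X) * ((Y + s • C) * exp (s • X)) = Y := by
    intro s
    have h0 : exp ((-(0:ℂ)) • X) * ((Y + (0:ℂ) • C) • 1) = Y := by simp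
    have := is_const_of_deriv_eq_zero (f := fun s : ℂ =>
        exp ((-s) • X) * ((Y + s • C) * exp (s • X)))
      (fun u => (hd u).differentiableAt) (fun u => (hd u).deriv) s 0
    simpa [Function.comp_def] using this
  have e1 : exp (t • X) * exp ((-t) • X) = 1 := by
    letI : NormedAlgebra ℚ 𝔸 := NormedAlgebra.restrictScalars ℚ ℂ 𝔸
    rw [← exp_add_of_commute (((Commute.refl X).smul_left t).smul_right (-t))]
    simp [← add_smul]
  calc exp (t • X) * Y
      = exp (t • X) * (exp ((-t) • X) * ((Y + t • C) * exp (t • X))) := by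
        rw [hconst t]
    _ = (exp (t • X) * exp ((-t) • X)) * ((Y + t • C) * exp (t • X)) := by
        rw [mul_assoc]
    _ = (Y + t • C) * exp (t • X) := by rw [e1, one_mul]

end Aux

section Aux2

variable {𝔸 : Type*} [NormedRing 𝔸] [NormedAlgebra ℂ 𝔸] [CompleteSpace 𝔸]

lemma exp_smul_mul_exp_neg_smul (Z : 𝔸) (a : ℂ) :
    exp (a • Z) * exp ((-a) • Z) = 1 := by
  letI : NormedAlgebra ℚ 𝔸 := NormedAlgebra.restrictScalars ℚ ℂ 𝔸
  rw [← exp_add_of_commute (((Commute.refl Z).smul_left a).smul_right (-a))]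
  simp [← add_smul]

lemma bch_L1 (a b c r s : 𝔸) (u : ℂ) (h : r * b = (b + u • c) * r) :
    (a + b + u • c) * (r * s) = a * r * s + r * (b * s) := by
  rw [← mul_assoc r b s, h]
  simp only [add_mul, smul_mul_assoc, mul_assoc]
  abel

lemma bch_L2 (ab c q w : 𝔸) (u : ℂ) (hq : q * (ab + u • c) = (ab + u • c) * q) :
    (-1 : ℂ) • (ab * q) * w + q * ((ab + u • c) * w) = u • c * (q * w) := by
  rw [← mul_assoc q, hq]
  simp only [add_mul, smul_mul_assoc, mul_assoc, neg_one_smul, neg_mul]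
  abel

lemma bch_L3 (c p z : 𝔸) (u : ℂ) (hpc : p * c = c * p) :
    (-u) • (c * p) * z + p * (u • c * z) = 0 := by
  have h1 : p * (u • c * z) = u • (c * (p * z)) := by
    rw [smul_mul_assoc, mul_smul_comm, ← mul_assoc, hpc, mul_assoc]
  rw [h1, smul_mul_assoc, mul_assoc, neg_smul, neg_add_cancel]

lemma bch_main (A B : 𝔸)
    (h1 : A * (A * B - B * A) = (A * B - B * A) * A)
    (h2 : B * (A * B - B * A) = (A * B - B * A) * B) :
    exp A * exp B = exp (A + B + (1 / 2 : ℂ) • (A * B - B * A)) := by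
  set C := A * B - B * A with hC
  have cAC : A * C = C * A := h1
  have cBC : B * C = C * B := h2
  have cSC : (A + B) * C = C * (A + B) := by rw [add_mul, mul_add, cAC, cBC]
  have cSC' : Commute (A + B) C := cSC
  have key1 : ∀ t : ℂ, exp (t • A) * B = (B + t • C) * exp (t • A) := fun t =>
    bch_conj A B h1 t
  have hd : ∀ u : ℂ, HasDerivAt (fun t : ℂ =>
      exp ((-(t ^ 2) / 2) • C) * (exp ((-t) • (A + B)) * (exp (t • A) * exp (t • B))))
      0 u := by
    intro u
    have dW : HasDerivAt (fun t : ℂ => exp (t • A) * exp (t • B))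
        ((A + B + u • C) * (exp (u • A) * exp (u • B))) u := by
      have total := (hasDerivAt_exp_smul_const' (𝕂 := ℂ) A u).mul
        (hasDerivAt_exp_smul_const' (𝕂 := ℂ) B u)
      convert total using 1
      · rfl
      exact bch_L1 A B C (exp (u • A)) (exp (u • B)) u (key1 u)
    have dQ : HasDerivAt (fun t : ℂ => exp ((-t) • (A + B)))
        ((-1 : ℂ) • ((A + B) * exp ((-u) • (A + B)))) u := by
      have := (hasDerivAt_exp_smul_const' (𝕂 := ℂ) (A + B) (-u)).scomp u (hasDerivAt_neg u)
      simpa only [Function.comp_def] using this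
    have dQW : HasDerivAt (fun t : ℂ =>
        exp ((-t) • (A + B)) * (exp (t • A) * exp (t • B)))
        (u • C * (exp ((-u) • (A + B)) * (exp (u • A) * exp (u • B)))) u := by
      have total := dQ.mul dW
      convert total using 1
      · rfl
      have hq : exp ((-u) • (A + B)) * (A + B + u • C)
          = (A + B + u • C) * exp ((-u) • (A + B)) := by
        have hcomm : Commute ((-u) • (A + B)) (A + B + u • C) :=
          Commute.add_right ((Commute.refl (A + B)).smul_left _)
            ((cSC'.smul_left _).smul_right _)
        exact (hcomm.exp_left).eq
      exact (bch_L2 (A + B) C (exp ((-u) • (A + B)))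
        (exp (u • A) * exp (u • B)) u hq).symm
    have dP : HasDerivAt (fun t : ℂ => exp ((-(t ^ 2) / 2) • C))
        ((-u) • (C * exp ((-(u ^ 2) / 2) • C))) u := by
      have dφ : HasDerivAt (fun t : ℂ => -(t ^ 2) / 2) (-u) u := by
        have := ((hasDerivAt_pow 2 u).fun_neg.div_const 2)
        refine this.congr_deriv ?_
        push_cast
        ring
      have := (hasDerivAt_exp_smul_const' (𝕂 := ℂ) C (-(u ^ 2) / 2)).scomp u dφ
      simpa only [Function.comp_def] using this
    have total := dP.mul dQW
    convert total using 1
    · rfl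
    have hpc : exp ((-(u ^ 2) / 2) • C) * C = C * exp ((-(u ^ 2) / 2) • C) :=
      (((Commute.refl C).smul_left _).exp_left).eq
    exact (bch_L3 C (exp ((-(u ^ 2) / 2) • C))
      (exp ((-u) • (A + B)) * (exp (u • A) * exp (u • B))) u hpc).symm
  have hconst := is_const_of_deriv_eq_zero (f := fun t : ℂ =>
      exp ((-(t ^ 2) / 2) • C) * (exp ((-t) • (A + B)) * (exp (t • A) * exp (t • B))))
    (fun u => (hd u).differentiableAt) (fun u => (hd u).deriv) 1 0
  have E : exp (-((1 / 2 : ℂ) • C)) * (exp (-(A + B)) * (exp A * exp B)) = 1 := by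
    have h10 := hconst
    norm_num at h10
    rw [show (-A + -B : 𝔸) = -(A + B) by abel] at h10
    exact h10
  have hinvC : exp ((1 / 2 : ℂ) • C) * exp (-((1 / 2 : ℂ) • C)) = 1 := by
    have h := exp_smul_mul_exp_neg_smul C (1 / 2 : ℂ)
    rwa [neg_smul] at h
  have hinvS : exp (A + B) * exp (-(A + B)) = 1 := by
    have h := exp_smul_mul_exp_neg_smul (A + B) (1 : ℂ)
    rwa [neg_smul, one_smul] at h
  have e2 : exp (-(A + B)) * (exp A * exp B) = exp ((1 / 2 : ℂ) • C) := by
    have := congrArg (fun z => exp ((1 / 2 : ℂ) • C) * z) E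
    rw [← mul_assoc, hinvC, one_mul, mul_one] at this
    exact this
  have e3 : exp A * exp B = exp (A + B) * exp ((1 / 2 : ℂ) • C) := by
    have := congrArg (fun z => exp (A + B) * z) e2
    rw [← mul_assoc, hinvS, one_mul] at this
    exact this
  letI : NormedAlgebra ℚ 𝔸 := NormedAlgebra.restrictScalars ℚ ℂ 𝔸
  rw [e3, exp_add_of_commute (cSC'.smul_right _)]

end Aux2

theorem baker_campbell_hausdorff_special
    (n : ℕ) (A B : Matrix (Fin n) (Fin n) ℂ)
    (h1 : A * (A * B - B * A) = (A * B - B * A) * A)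
    (h2 : B * (A * B - B * A) = (A * B - B * A) * B) :
    NormedSpace.exp A * NormedSpace.exp B
      = NormedSpace.exp (A + B + (1 / 2 : ℂ) • (A * B - B * A)) := by
  letI : SeminormedRing (Matrix (Fin n) (Fin n) ℂ) := Matrix.linftyOpSemiNormedRing
  letI : NormedRing (Matrix (Fin n) (Fin n) ℂ) := Matrix.linftyOpNormedRing
  letI : NormedAlgebra ℂ (Matrix (Fin n) (Fin n) ℂ) := Matrix.linftyOpNormedAlgebra
  exact bch_main A B h1 h2
end
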